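/- Fix M > sum of all edge costs c_{ij}. Among all CVRP solutions (with m routes and no cluster constraint), any solution minimizing the penalized cost c^M also minimizes the number of inter-cluster edges; consequently, if a cluster-contiguous (CluVRP-feasible) solution exists, every c^M-optimal CVRP solution is cluster-contiguous and is an optimal CluVRP solution. -/

import Mathlib

/-- Cost of a walk given as a list of vertices. -/
def pathCost {α : Type*} (c : α → α → ℝ) : List α → ℝ
  | a :: b :: t => c a b + pathCost c (b :: t)
  | _ => 0

/-- Cost of a single closed route based at the depot (`none`). -/
def routeCost {C : Type*} (c : Option C → Option C → ℝ) (r : List C) : ℝ :=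
  pathCost c ((none :: r.map some) ++ [none])

/-- Total cost of a solution. -/
def solCost {C : Type*} {m : ℕ} (c : Option C → Option C → ℝ)
    (routes : Fin m → List C) : ℝ :=
  ∑ i, routeCost c (routes i)

/-- The penalized cost function `c^M`. -/
def penalizedCost {C : Type*} {N : ℕ} [DecidableEq C] (clu : C → Fin N)
    (c : Option C → Option C → ℝ) (M : ℝ) (a b : Option C) : ℝ :=
  c a b + (if a = none ∨ b = none ∨ Option.map clu a ≠ Option.map clu b then M else 0)

/-- Number of adjacent positions in a list whose two entries differ. -/
def countChanges {α : Type*} [DecidableEq α] : List α → ℕ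
  | a :: b :: t => (if a = b then 0 else 1) + countChanges (b :: t)
  | _ => 0

/-- Number of penalized (inter-cluster or depot-incident) edges of a solution. -/
def penEdgeCount {C : Type*} {N m : ℕ} (clu : C → Fin N) (routes : Fin m → List C) : ℕ :=
  ∑ i, countChanges (((none : Option (Fin N)) :: (routes i).map (fun v => some (clu v))) ++ [none])

/-- CVRP feasibility (m nonempty routes, no cluster constraint). -/
def CVRPFeasible {C : Type*} {m : ℕ} (Q : ℚ) (q : C → ℚ) (routes : Fin m → List C) : Prop :=
  (∀ v : C, ∃! i : Fin m, v ∈ routes i) ∧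
  (∀ i, (routes i).Nodup) ∧
  (∀ i, routes i ≠ []) ∧
  (∀ i, ((routes i).map q).sum ≤ Q)

/-- Cluster contiguity. -/
def ClusterContiguous {C : Type*} {N m : ℕ} (clu : C → Fin N) (routes : Fin m → List C) : Prop :=
  ∀ k : Fin N, ∃ (i : Fin m) (l₁ l₂ l₃ : List C),
    routes i = l₁ ++ l₂ ++ l₃ ∧ ∀ v, v ∈ l₂ ↔ clu v = k
section AuxLemmas

open List Finset

variable {α : Type*}

lemma cc_cons [DecidableEq α] (a b : α) (t : List α) :
    countChanges (a :: b :: t) = (if a = b then 0 else 1) + countChanges (b :: t) := rfl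

lemma pc_cons (c : α → α → ℝ) (a b : α) (t : List α) :
    pathCost c (a :: b :: t) = c a b + pathCost c (b :: t) := rfl

lemma cc_aux [DecidableEq α] : ∀ (t : List α) (a : α),
    countChanges (some a :: (t.map some ++ [(none : Option α)])) = 1 + countChanges (a :: t)
  | [], a => by simp [countChanges]
  | b :: t, a => by
    rw [List.map_cons, List.cons_append, cc_cons, cc_aux t b, cc_cons]
    by_cases h : a = b <;> simp [h]

lemma cc_dec [DecidableEq α] (a : α) (t : List α) :
    countChanges (((none : Option α) :: (a :: t).map some) ++ [none]) = 2 + countChanges (a :: t) := by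
  show countChanges ((none : Option α) :: some a :: (t.map some ++ [none])) = _
  rw [cc_cons, cc_aux t a]
  simp
  omega

lemma pathCost_nonneg (c : α → α → ℝ) (hnn : ∀ a b, 0 ≤ c a b) : ∀ l, 0 ≤ pathCost c l
  | [] => le_refl 0
  | [a] => le_refl 0
  | a :: b :: t => by
      rw [pc_cons]
      exact add_nonneg (hnn a b) (pathCost_nonneg c hnn (b :: t))

end AuxLemmas
section AuxPen

variable {C : Type*} [DecidableEq C] {N : ℕ} (clu : C → Fin N)
  (c : Option C → Option C → ℝ) (M : ℝ)

lemma pen_aux : ∀ (t : List C) (v : C),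
    pathCost (penalizedCost clu c M) (some v :: (t.map some ++ [(none : Option C)]))
      = pathCost c (some v :: (t.map some ++ [none]))
        + M * countChanges (some (clu v) :: (t.map (fun w => some (clu w)) ++ [(none : Option (Fin N))]))
  | [], v => by
      simp [pathCost, penalizedCost, countChanges]
  | w :: t, v => by
      rw [List.map_cons, List.cons_append, List.map_cons, List.cons_append,
        pc_cons, pc_cons, cc_cons, pen_aux t w]
      by_cases h : clu v = clu w <;> simp [penalizedCost, h] <;> push_cast <;> ring

lemma routeCost_pen (r : List C) (hr : r ≠ []) :
    routeCost (penalizedCost clu c M) r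
      = routeCost c r
        + M * countChanges (((none : Option (Fin N)) :: r.map (fun v => some (clu v))) ++ [none]) := by
  obtain ⟨a, t, rfl⟩ : ∃ a t, r = a :: t := by
    cases r with
    | nil => exact absurd rfl hr
    | cons a t => exact ⟨a, t, rfl⟩
  unfold routeCost
  show pathCost _ ((none : Option C) :: some a :: (t.map some ++ [none]))
      = pathCost c ((none : Option C) :: some a :: (t.map some ++ [none])) + M *
        countChanges ((none : Option (Fin N)) :: some (clu a) :: (t.map (fun v => some (clu v)) ++ [none]))
  rw [pc_cons, pc_cons, cc_cons, pen_aux]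
  simp [penalizedCost]
  push_cast
  ring

lemma solCost_pen {m : ℕ} (s : Fin m → List C) (hne : ∀ i, s i ≠ []) :
    solCost (penalizedCost clu c M) s = solCost c s + M * (penEdgeCount clu s : ℝ) := by
  unfold solCost penEdgeCount
  rw [Nat.cast_sum, Finset.mul_sum, ← Finset.sum_add_distrib]
  exact Finset.sum_congr rfl fun i _ => routeCost_pen clu c M (s i) (hne i)

end AuxPen
section AuxEdges

variable {α : Type*}

/-- List of consecutive edges of a walk. -/
def edgeList (l : List α) : List (α × α) := l.zip l.tail

lemma pathCost_eq_sum (c : α → α → ℝ) : ∀ l, pathCost c l = ((edgeList l).map fun p => c p.1 p.2).sum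
  | [] => by simp [pathCost, edgeList]
  | [a] => by simp [pathCost, edgeList]
  | a :: b :: t => by
      have h : edgeList (a :: b :: t) = (a, b) :: edgeList (b :: t) := rfl
      rw [pc_cons, h, List.map_cons, List.sum_cons, pathCost_eq_sum c (b :: t)]

lemma edgeList_nodup [DecidableEq α] (l : List α) (h : l.tail.Nodup) : (edgeList l).Nodup := by
  have hm : (edgeList l).map Prod.snd = l.tail :=
    List.map_snd_zip (by cases l <;> simp)
  rw [← hm] at h
  exact h.of_map _

lemma mem_edgeList_snd {l : List α} {p : α × α} (h : p ∈ edgeList l) : p.2 ∈ l.tail := by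
  obtain ⟨x, y⟩ := p
  exact (List.of_mem_zip h).2

lemma edgeList_none {C : Type*} : ∀ (r : List C) (x : Option C) (p : Option C × Option C),
    p ∈ edgeList (x :: (r.map some ++ [none])) → p.2 = none →
    (∃ v ∈ r, p.1 = some v) ∨ (r = [] ∧ p.1 = x)
  | [], x, p, h, h2 => by
      simp only [List.map_nil, List.nil_append] at h
      have : edgeList (x :: [(none : Option C)]) = [(x, none)] := rfl
      rw [this] at h
      simp only [List.mem_singleton] at h
      exact Or.inr ⟨rfl, by rw [h]⟩
  | a :: t, x, p, h, h2 => by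
      rw [List.map_cons, List.cons_append] at h
      have he : edgeList (x :: some a :: (t.map some ++ [none]))
          = (x, some a) :: edgeList (some a :: (t.map some ++ [none])) := rfl
      rw [he] at h
      rcases List.mem_cons.mp h with h | h
      · rw [h] at h2; exact absurd h2 (by simp)
      · rcases edgeList_none t (some a) p h h2 with ⟨v, hv, hp⟩ | ⟨ht, hp⟩
        · exact Or.inl ⟨v, List.mem_cons_of_mem _ hv, hp⟩
        · exact Or.inl ⟨a, List.mem_cons_self, hp⟩

lemma sum_list_le {β : Type*} [Fintype β] [DecidableEq β] {m : ℕ} (f : β → ℝ)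
    (hf : ∀ b, 0 ≤ f b) (ls : Fin m → List β) (hnd : ∀ i, (ls i).Nodup)
    (hdisj : ∀ i j, i ≠ j → ∀ b, b ∈ ls i → b ∉ ls j) :
    ∑ i, ((ls i).map f).sum ≤ ∑ b, f b := by
  have h1 : ∀ i, ((ls i).map f).sum = ∑ b ∈ (ls i).toFinset, f b :=
    fun i => (List.sum_toFinset f (hnd i)).symm
  have hpd : ((Finset.univ : Finset (Fin m)) : Set (Fin m)).PairwiseDisjoint (fun i => (ls i).toFinset) := by
    intro i _ j _ hij
    refine Finset.disjoint_left.mpr fun b hb hb' => ?_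
    exact hdisj i j hij b (List.mem_toFinset.mp hb) (List.mem_toFinset.mp hb')
  calc ∑ i, ((ls i).map f).sum = ∑ i, ∑ b ∈ (ls i).toFinset, f b := by
        exact Finset.sum_congr rfl fun i _ => h1 i
    _ = ∑ b ∈ Finset.univ.biUnion (fun i => (ls i).toFinset), f b := (Finset.sum_biUnion hpd).symm
    _ ≤ ∑ b, f b := Finset.sum_le_sum_of_subset_of_nonneg (Finset.subset_univ _) fun b _ _ => hf b

lemma solCost_le {C : Type*} [Fintype C] [DecidableEq C] {m : ℕ}
    (c : Option C → Option C → ℝ) (hnn : ∀ a b, 0 ≤ c a b) (s : Fin m → List C)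
    (huniq : ∀ v : C, ∃! i, v ∈ s i) (hnd : ∀ i, (s i).Nodup) (hne : ∀ i, s i ≠ []) :
    solCost c s ≤ ∑ a : Option C, ∑ b : Option C, c a b := by
  set f : Option C × Option C → ℝ := fun p => c p.1 p.2 with hf
  set L : Fin m → List (Option C) := fun i => (none : Option C) :: ((s i).map some ++ [none]) with hL
  have hroute : ∀ i, routeCost c (s i) = ((edgeList (L i)).map f).sum := by
    intro i
    unfold routeCost
    rw [show ((none :: (s i).map some) ++ [(none : Option C)]) = L i from rfl, pathCost_eq_sum]
  have htail : ∀ i, ((L i).tail).Nodup := by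
    intro i
    show ((s i).map some ++ [(none : Option C)]).Nodup
    rw [List.nodup_append]
    refine ⟨(hnd i).map (Option.some_injective C), List.nodup_singleton _, ?_⟩
    intro x hx y hy hxy
    simp only [List.mem_singleton] at hy
    rcases List.mem_map.mp hx with ⟨v, _, hv⟩
    rw [hxy, hy] at hv
    exact Option.some_ne_none v hv
  have hmemsnd : ∀ i (p : Option C × Option C), p ∈ edgeList (L i) → ∀ v, p.2 = some v → v ∈ s i := by
    intro i p hp v hv
    have := mem_edgeList_snd hp
    rw [hv] at this
    show v ∈ s i
    rcases List.mem_append.mp this with h | h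
    · rcases List.mem_map.mp h with ⟨w, hw, hww⟩
      rw [Option.some_inj.mp hww] at hw; exact hw
    · simp at h
  have hdisj : ∀ i j, i ≠ j → ∀ p, p ∈ edgeList (L i) → p ∉ edgeList (L j) := by
    intro i j hij p hpi hpj
    rcases hq : p.2 with _ | v
    · rcases edgeList_none (s i) none p hpi hq with ⟨v, hv, hp1⟩ | ⟨hsi, _⟩
      · rcases edgeList_none (s j) none p hpj hq with ⟨w, hw, hp1'⟩ | ⟨hsj, _⟩
        · rw [hp1] at hp1'
          rw [← Option.some_inj.mp hp1'] at hw
          obtain ⟨i', hi', hu⟩ := huniq v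
          exact hij ((hu i (by exact hv)) ▸ (hu j hw) ▸ rfl)
        · exact hne j hsj
      · exact hne i hsi
    · obtain ⟨i', hi', hu⟩ := huniq v
      exact hij ((hu i (hmemsnd i p hpi v hq)) ▸ (hu j (hmemsnd j p hpj v hq)) ▸ rfl)
  calc solCost c s = ∑ i, ((edgeList (L i)).map f).sum := Finset.sum_congr rfl fun i _ => hroute i
    _ ≤ ∑ p : Option C × Option C, f p :=
        sum_list_le f (fun p => hnn p.1 p.2) _ (fun i => edgeList_nodup _ (htail i)) hdisj
    _ = ∑ a : Option C, ∑ b : Option C, c a b := by rw [Fintype.sum_prod_type]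

end AuxEdges
section AuxContig

variable {α : Type*}

/-- All occurrences of `k` in `t` are contiguous. -/
def Contig (k : α) (t : List α) : Prop :=
  ∃ t₁ t₂ t₃ : List α, t = t₁ ++ t₂ ++ t₃ ∧ (∀ x ∈ t₂, x = k) ∧ k ∉ t₁ ∧ k ∉ t₃

lemma contig_eq_head {k : α} {l : List α} (h : Contig k (k :: l)) :
    ∃ t₂ t₃ : List α, l = t₂ ++ t₃ ∧ (∀ x ∈ t₂, x = k) ∧ k ∉ t₃ := by
  obtain ⟨t₁, t₂, t₃, he, h2, h1, h3⟩ := h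
  cases t₁ with
  | cons x t₁' =>
    have : x = k := by
      have := congrArg (fun l => l.head?) he
      simpa using this.symm
    rw [this] at h1
    exact absurd (List.mem_cons_self) h1
  | nil =>
    simp only [List.nil_append] at he
    cases t₂ with
    | nil =>
      simp only [List.nil_append] at he
      rw [← he] at h3
      exact absurd (List.mem_cons_self) h3
    | cons y t₂' =>
      rw [List.cons_append] at he
      refine ⟨t₂', t₃, (List.cons.injEq _ _ _ _ ▸ he).2, fun x hx => h2 x (List.mem_cons_of_mem _ hx), h3⟩

lemma contig_ne_head {k a : α} {l : List α} (hka : k ≠ a) (hmem : k ∈ l) (h : Contig k (a :: l)) :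
    Contig k l := by
  obtain ⟨t₁, t₂, t₃, he, h2, h1, h3⟩ := h
  cases t₁ with
  | nil =>
    simp only [List.nil_append] at he
    cases t₂ with
    | nil =>
      simp only [List.nil_append] at he
      rw [← he] at h3
      exact absurd (List.mem_cons_of_mem _ hmem) h3
    | cons y t₂' =>
      have hy : y = a := by
        have := congrArg (fun l => l.head?) he
        simpa using this.symm
      exact absurd ((h2 y (List.mem_cons_self)).symm.trans hy) hka
  | cons x t₁' =>
    have hx : x = a := by
      have := congrArg (fun l => l.head?) he
      simpa using this.symm
    have htl : l = t₁' ++ t₂ ++ t₃ := by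
      have := congrArg List.tail he
      simpa using this
    exact ⟨t₁', t₂, t₃, htl, h2, fun hk => h1 (List.mem_cons_of_mem _ hk), h3⟩

lemma contig_cons_of_ne {k a : α} {l : List α} (hka : k ≠ a) (h : Contig k l) :
    Contig k (a :: l) := by
  obtain ⟨t₁, t₂, t₃, he, h2, h1, h3⟩ := h
  exact ⟨a :: t₁, t₂, t₃, by rw [he]; rfl, h2, by
    intro hk
    rcases List.mem_cons.mp hk with h | h
    · exact hka h
    · exact h1 h, h3⟩

lemma card_le_cc [DecidableEq α] : ∀ t : List α, t ≠ [] →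
    t.toFinset.card ≤ 1 + countChanges t ∧
    (t.toFinset.card = 1 + countChanges t → ∀ k, Contig k t)
  | [], h => absurd rfl h
  | [a], _ => by
    constructor
    · simp [countChanges]
    · intro _ k
      by_cases hk : k = a
      · exact ⟨[], [a], [], rfl, by simp [hk], by simp, by simp⟩
      · exact ⟨[a], [], [], rfl, by simp, by simp [hk], by simp⟩
  | a :: b :: t, _ => by
    obtain ⟨ih1, ih2⟩ := card_le_cc (b :: t) (List.cons_ne_nil _ _)
    by_cases hab : a = b
    · subst hab
      have hfs : (a :: a :: t).toFinset = (a :: t).toFinset := by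
        simp [List.toFinset_cons]
      have hcc : countChanges (a :: a :: t) = countChanges (a :: t) := by
        rw [cc_cons]; simp
      rw [hfs, hcc]
      refine ⟨ih1, fun heq k => ?_⟩
      have hk := ih2 heq k
      by_cases hka : k = a
      · subst hka
        obtain ⟨t₂, t₃, he, h2, h3⟩ := contig_eq_head hk
        exact ⟨[], k :: k :: t₂, t₃, by rw [List.nil_append, List.cons_append, List.cons_append, ← he],
          by intro x hx; rcases List.mem_cons.mp hx with h | hx; exact h;
             rcases List.mem_cons.mp hx with h | hx; exact h; exact h2 x hx,
          by simp, h3⟩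
      · exact contig_cons_of_ne hka hk
    · have hcc : countChanges (a :: b :: t) = 1 + countChanges (b :: t) := by
        rw [cc_cons]; simp [hab]
      by_cases ha : a ∈ b :: t
      · have hfs : (a :: b :: t).toFinset = (b :: t).toFinset := by
          rw [List.toFinset_cons]
          exact Finset.insert_eq_self.mpr (List.mem_toFinset.mpr ha)
        rw [hfs, hcc]
        exact ⟨ih1.trans (by omega), fun heq => absurd ih1 (by omega)⟩
      · have hfs : (a :: b :: t).toFinset.card = 1 + (b :: t).toFinset.card := by
          rw [List.toFinset_cons, Finset.card_insert_of_notMem (fun hm => ha (List.mem_toFinset.mp hm))]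
          omega
        rw [hfs, hcc]
        constructor
        · omega
        · intro heq k
          have hk := ih2 (by omega) k
          by_cases hka : k = a
          · exact ⟨[], [a], b :: t, rfl, by simp [hka], by simp, by rw [hka]; exact ha⟩
          · exact contig_cons_of_ne hka hk

lemma cc_le_card [DecidableEq α] : ∀ t : List α, t ≠ [] → (∀ k ∈ t, Contig k t) →
    1 + countChanges t ≤ t.toFinset.card
  | [], h, _ => absurd rfl h
  | [a], _, _ => by simp [countChanges]
  | a :: b :: t, _, hcont => by
    by_cases hab : a = b
    · subst hab
      have hcc : countChanges (a :: a :: t) = countChanges (a :: t) := by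
        rw [cc_cons]; simp
      have hfs : (a :: a :: t).toFinset = (a :: t).toFinset := by
        simp [List.toFinset_cons]
      rw [hcc, hfs]
      refine cc_le_card (a :: t) (List.cons_ne_nil _ _) fun k hk => ?_
      have hk' := hcont k (List.mem_cons_of_mem _ hk)
      by_cases hka : k = a
      · subst hka
        obtain ⟨t₂, t₃, he, h2, h3⟩ := contig_eq_head hk'
        cases t₂ with
        | nil =>
          simp only [List.nil_append] at he
          rw [← he] at h3
          exact absurd (List.mem_cons_self) h3
        | cons y t₂' =>
          have htl : t = t₂' ++ t₃ := by
            have := congrArg List.tail he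
            simpa using this
          exact ⟨[], k :: t₂', t₃, by rw [List.nil_append, List.cons_append, ← htl],
            by intro x hx; rcases List.mem_cons.mp hx with h | hx; exact h; exact h2 x (List.mem_cons_of_mem _ hx),
            by simp, h3⟩
      · exact contig_ne_head hka hk hk'
    · have hanb : a ∉ b :: t := by
        obtain ⟨t₂, t₃, he, h2, h3⟩ := contig_eq_head (hcont a (List.mem_cons_self))
        cases t₂ with
        | nil =>
          simp only [List.nil_append] at he
          rw [he]; exact h3
        | cons y t₂' =>
          have hy : y = b := by
            have := congrArg (fun l => l.head?) he
            simpa using this.symm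
          exact absurd ((h2 y (List.mem_cons_self)).symm.trans hy) hab
      have hcc : countChanges (a :: b :: t) = 1 + countChanges (b :: t) := by
        rw [cc_cons]; simp [hab]
      have hfs : (a :: b :: t).toFinset.card = 1 + (b :: t).toFinset.card := by
        rw [List.toFinset_cons, Finset.card_insert_of_notMem (fun hm => hanb (List.mem_toFinset.mp hm))]
        omega
      rw [hcc, hfs]
      have hrec := cc_le_card (b :: t) (List.cons_ne_nil _ _) fun k hk => by
        have hka : k ≠ a := fun h => hanb (h ▸ hk)
        exact contig_ne_head hka hk (hcont k (List.mem_cons_of_mem _ hk))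
      omega

end AuxContig
section AuxCount

open Finset

lemma sum_eq_forall {ι : Type*} [Fintype ι] (f g : ι → ℕ) (hle : ∀ i, f i ≤ g i)
    (heq : ∑ i, g i ≤ ∑ i, f i) : ∀ i, g i = f i := by
  intro i
  by_contra hne
  have hlt : f i < g i := lt_of_le_of_ne (hle i) (fun h => hne h.symm)
  have : ∑ j, f j < ∑ j, g j :=
    Finset.sum_lt_sum (fun j _ => hle j) ⟨i, Finset.mem_univ i, hlt⟩
  omega

lemma exists_unique_mem {N m : ℕ} (F : Fin m → Finset (Fin N))
    (hcov : ∀ k, ∃ i, k ∈ F i) (hsum : ∑ i, (F i).card = N) :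
    ∀ k : Fin N, ∃! i, k ∈ F i := by
  classical
  have hdc : ∑ k : Fin N, (Finset.univ.filter (fun i => k ∈ F i)).card = ∑ i, (F i).card := by
    calc ∑ k : Fin N, (Finset.univ.filter (fun i => k ∈ F i)).card
        = ∑ k : Fin N, ∑ i : Fin m, if k ∈ F i then 1 else 0 :=
          Finset.sum_congr rfl fun k _ => Finset.card_filter _ _
      _ = ∑ i : Fin m, ∑ k : Fin N, if k ∈ F i then 1 else 0 := Finset.sum_comm
      _ = ∑ i, (F i).card := by
          refine Finset.sum_congr rfl fun i _ => ?_
          rw [← Finset.card_filter]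
          congr 1
          ext k
          simp
  have hdc' : ∑ k : Fin N, (Finset.univ.filter (fun i => k ∈ F i)).card = N := hdc.trans hsum
  have hone : ∀ k : Fin N, 1 ≤ (Finset.univ.filter (fun i => k ∈ F i)).card := by
    intro k
    obtain ⟨i, hi⟩ := hcov k
    exact Finset.card_pos.mpr ⟨i, Finset.mem_filter.mpr ⟨Finset.mem_univ i, hi⟩⟩
  have hsum1 : ∑ k : Fin N, (Finset.univ.filter (fun i => k ∈ F i)).card ≤ ∑ k : Fin N, 1 := by
    rw [hdc']; simp
  have hall : ∀ k : Fin N, (Finset.univ.filter (fun i => k ∈ F i)).card = 1 :=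
    fun k => sum_eq_forall (fun _ => 1) (fun k => (Finset.univ.filter (fun i => k ∈ F i)).card)
      hone hsum1 k
  intro k
  obtain ⟨i, hi⟩ := hcov k
  refine ⟨i, hi, fun j hj => ?_⟩
  have hmem : ∀ i', k ∈ F i' → i' ∈ Finset.univ.filter (fun i' => k ∈ F i') :=
    fun i' h => Finset.mem_filter.mpr ⟨Finset.mem_univ _, h⟩
  obtain ⟨x, hx⟩ := Finset.card_eq_one.mp (hall k)
  have h1 : j = x := by have := hmem j hj; rw [hx] at this; simpa using this
  have h2 : i = x := by have := hmem i hi; rw [hx] at this; simpa using this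
  rw [h1, h2]

variable {C : Type*} [DecidableEq C] {N m : ℕ} (clu : C → Fin N)

lemma penEdge_eq (s : Fin m → List C) (hne : ∀ i, s i ≠ []) :
    penEdgeCount clu s = 2 * m + ∑ i, countChanges ((s i).map clu) := by
  unfold penEdgeCount
  have h : ∀ i, countChanges (((none : Option (Fin N)) :: (s i).map (fun v => some (clu v))) ++ [none])
      = 2 + countChanges ((s i).map clu) := by
    intro i
    obtain ⟨a, t, he⟩ : ∃ a t, s i = a :: t := by
      cases hsi : s i with
      | nil => exact absurd hsi (hne i)
      | cons a t => exact ⟨a, t, rfl⟩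
    rw [he]
    have hmm : (a :: t).map (fun v => some (clu v)) = (clu a :: t.map clu).map some := by
      simp [List.map_map, Function.comp]
    rw [hmm, cc_dec, ← List.map_cons]
  rw [Finset.sum_congr rfl fun i _ => h i, Finset.sum_add_distrib]
  simp
  omega

lemma lower_bound (s : Fin m → List C) (hne : ∀ i, s i ≠ [])
    (hcov : ∀ k : Fin N, ∃ i, ∃ v ∈ s i, clu v = k) :
    m + N ≤ penEdgeCount clu s := by
  classical
  set t : Fin m → List (Fin N) := fun i => (s i).map clu with ht
  have htne : ∀ i, t i ≠ [] := by
    intro i h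
    exact hne i (List.map_eq_nil_iff.mp h)
  have h1 : ∀ i, (t i).toFinset.card ≤ 1 + countChanges (t i) :=
    fun i => (card_le_cc (t i) (htne i)).1
  have h2 : N ≤ ∑ i, (t i).toFinset.card := by
    have huniv : (Finset.univ : Finset (Fin N)) ⊆ Finset.univ.biUnion (fun i => (t i).toFinset) := by
      intro k _
      obtain ⟨i, v, hv, hk⟩ := hcov k
      exact Finset.mem_biUnion.mpr ⟨i, Finset.mem_univ i,
        List.mem_toFinset.mpr (List.mem_map.mpr ⟨v, hv, hk⟩)⟩
    calc N = (Finset.univ : Finset (Fin N)).card := by simp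
      _ ≤ (Finset.univ.biUnion (fun i => (t i).toFinset)).card := Finset.card_le_card huniv
      _ ≤ ∑ i, (t i).toFinset.card := Finset.card_biUnion_le
  have h3 : ∑ i, (t i).toFinset.card ≤ ∑ i, (1 + countChanges (t i)) :=
    Finset.sum_le_sum fun i _ => h1 i
  have h4 : ∑ i, (1 + countChanges (t i)) = m + ∑ i, countChanges (t i) := by
    rw [Finset.sum_add_distrib]; simp
  have h5 : penEdgeCount clu s = 2 * m + ∑ i, countChanges (t i) := penEdge_eq clu s hne
  omega

end AuxCount
section AuxMain

variable {C : Type*} [DecidableEq C] {N m : ℕ}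

lemma upper_bound (clu : C → Fin N) (s : Fin m → List C)
    (huniq : ∀ v : C, ∃! i, v ∈ s i) (hnd : ∀ i, (s i).Nodup)
    (hne : ∀ i, s i ≠ []) (hcc : ClusterContiguous clu s) :
    penEdgeCount clu s ≤ m + N := by
  classical
  set t : Fin m → List (Fin N) := fun i => (s i).map clu with ht
  have htne : ∀ i, t i ≠ [] := fun i h => hne i (List.map_eq_nil_iff.mp h)
  have hsplit : ∀ (k : Fin N) (i : Fin m) (v : C), v ∈ s i → clu v = k →
      ∃ l₁ l₂ l₃, s i = l₁ ++ l₂ ++ l₃ ∧ (∀ w, w ∈ l₂ ↔ clu w = k) := by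
    intro k i v hv hk
    obtain ⟨j, l₁, l₂, l₃, hj, hl₂⟩ := hcc k
    have hvl₂ : v ∈ l₂ := (hl₂ v).mpr hk
    have hvj : v ∈ s j := by
      rw [hj]
      exact List.mem_append.mpr (Or.inl (List.mem_append.mpr (Or.inr hvl₂)))
    obtain ⟨i', _, hu⟩ := huniq v
    rw [(hu i hv).trans (hu j hvj).symm]
    exact ⟨l₁, l₂, l₃, hj, hl₂⟩
  have hcont : ∀ i, ∀ k ∈ t i, Contig k (t i) := by
    intro i k hk
    rcases List.mem_map.mp hk with ⟨v, hv, hkv⟩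
    obtain ⟨l₁, l₂, l₃, hsi, hl₂⟩ := hsplit k i v hv hkv
    have hnds := hnd i
    rw [hsi] at hnds
    have h12 := List.nodup_append.mp hnds
    have h1 := List.nodup_append.mp h12.1
    refine ⟨l₁.map clu, l₂.map clu, l₃.map clu, ?_, ?_, ?_, ?_⟩
    · show (s i).map clu = _
      rw [hsi]
      simp [List.map_append]
    · intro x hx
      rcases List.mem_map.mp hx with ⟨w, hw, hww⟩
      rw [← hww]
      exact (hl₂ w).mp hw
    · intro hkm
      rcases List.mem_map.mp hkm with ⟨w, hw, hww⟩
      exact h1.2.2 w hw w ((hl₂ w).mpr hww) rfl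
    · intro hkm
      rcases List.mem_map.mp hkm with ⟨w, hw, hww⟩
      exact h12.2.2 w (List.mem_append.mpr (Or.inr ((hl₂ w).mpr hww))) w hw rfl
  have hroute : ∀ (k : Fin N) (i : Fin m), k ∈ (t i).toFinset → ∀ j, k ∈ (t j).toFinset → i = j := by
    intro k i hki j hkj
    rcases List.mem_map.mp (List.mem_toFinset.mp hki) with ⟨v, hv, hkv⟩
    rcases List.mem_map.mp (List.mem_toFinset.mp hkj) with ⟨w, hw, hkw⟩
    obtain ⟨j₀, l₁, l₂, l₃, hj₀, hl₂⟩ := hcc k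
    have hvj : v ∈ s j₀ := by
      rw [hj₀]
      exact List.mem_append.mpr (Or.inl (List.mem_append.mpr (Or.inr ((hl₂ v).mpr hkv))))
    have hwj : w ∈ s j₀ := by
      rw [hj₀]
      exact List.mem_append.mpr (Or.inl (List.mem_append.mpr (Or.inr ((hl₂ w).mpr hkw))))
    obtain ⟨_, _, huv⟩ := huniq v
    obtain ⟨_, _, huw⟩ := huniq w
    rw [(huv i hv).trans (huv j₀ hvj).symm, (huw j hw).trans (huw j₀ hwj).symm]
  have hdisjF : ∀ i ∈ Finset.univ, ∀ j ∈ Finset.univ, i ≠ j →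
      Disjoint ((t i).toFinset) ((t j).toFinset) := by
    intro i _ j _ hij
    refine Finset.disjoint_left.mpr fun k hk hk' => hij (hroute k i hk j hk')
  have hsumcard : ∑ i, (t i).toFinset.card ≤ N := by
    rw [← Finset.card_biUnion hdisjF]
    calc (Finset.univ.biUnion fun i => (t i).toFinset).card
        ≤ (Finset.univ : Finset (Fin N)).card := Finset.card_le_univ _
      _ = N := by simp
  have h1 : ∀ i, 1 + countChanges (t i) ≤ (t i).toFinset.card :=
    fun i => cc_le_card (t i) (htne i) (hcont i)
  have h5 : penEdgeCount clu s = 2 * m + ∑ i, countChanges (t i) := penEdge_eq clu s hne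
  have h6 : ∑ i, (1 + countChanges (t i)) = m + ∑ i, countChanges (t i) := by
    rw [Finset.sum_add_distrib]; simp
  have h7 : ∑ i, (1 + countChanges (t i)) ≤ ∑ i, (t i).toFinset.card :=
    Finset.sum_le_sum fun i _ => h1 i
  omega

lemma contiguous_of_le (clu : C → Fin N) (hsurj : Function.Surjective clu)
    (s : Fin m → List C) (huniq : ∀ v : C, ∃! i, v ∈ s i) (hnd : ∀ i, (s i).Nodup)
    (hne : ∀ i, s i ≠ []) (hpe : penEdgeCount clu s ≤ m + N) :
    ClusterContiguous clu s := by
  classical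
  set t : Fin m → List (Fin N) := fun i => (s i).map clu with ht
  have htne : ∀ i, t i ≠ [] := fun i h => hne i (List.map_eq_nil_iff.mp h)
  have hcov : ∀ k : Fin N, ∃ i, k ∈ (t i).toFinset := by
    intro k
    obtain ⟨v, hv⟩ := hsurj k
    obtain ⟨i, hi, _⟩ := huniq v
    exact ⟨i, List.mem_toFinset.mpr (List.mem_map.mpr ⟨v, hi, hv⟩)⟩
  have h1 : ∀ i, (t i).toFinset.card ≤ 1 + countChanges (t i) :=
    fun i => (card_le_cc (t i) (htne i)).1
  have h5 : penEdgeCount clu s = 2 * m + ∑ i, countChanges (t i) := penEdge_eq clu s hne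
  have h2 : N ≤ ∑ i, (t i).toFinset.card := by
    have huniv : (Finset.univ : Finset (Fin N)) ⊆ Finset.univ.biUnion (fun i => (t i).toFinset) := by
      intro k _
      obtain ⟨i, hi⟩ := hcov k
      exact Finset.mem_biUnion.mpr ⟨i, Finset.mem_univ i, hi⟩
    calc N = (Finset.univ : Finset (Fin N)).card := by simp
      _ ≤ (Finset.univ.biUnion fun i => (t i).toFinset).card := Finset.card_le_card huniv
      _ ≤ ∑ i, (t i).toFinset.card := Finset.card_biUnion_le
  have h6 : ∑ i, (1 + countChanges (t i)) = m + ∑ i, countChanges (t i) := by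
    rw [Finset.sum_add_distrib]; simp
  have h3 : ∑ i, (1 + countChanges (t i)) ≤ N := by omega
  have h7 : ∑ i, (t i).toFinset.card ≤ ∑ i, (1 + countChanges (t i)) :=
    Finset.sum_le_sum fun i _ => h1 i
  have hsumN : ∑ i, (t i).toFinset.card = N := le_antisymm (h7.trans h3) h2
  have hptw : ∀ i, 1 + countChanges (t i) = (t i).toFinset.card :=
    sum_eq_forall (fun i => (t i).toFinset.card) (fun i => 1 + countChanges (t i)) h1
      (h3.trans (le_of_eq hsumN.symm))
  have hexcl : ∀ k : Fin N, ∃! i, k ∈ (t i).toFinset := exists_unique_mem _ hcov hsumN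
  intro k
  obtain ⟨v, hv⟩ := hsurj k
  obtain ⟨i, hvi, _⟩ := huniq v
  have hki : k ∈ (t i).toFinset := List.mem_toFinset.mpr (List.mem_map.mpr ⟨v, hvi, hv⟩)
  have hcont : Contig k (t i) := (card_le_cc (t i) (htne i)).2 (hptw i).symm k
  obtain ⟨u₁, u₂, u₃, hu, hall, hn1, hn3⟩ := hcont
  have hmap : (s i).map clu = (u₁ ++ u₂) ++ u₃ := hu
  obtain ⟨l₁₂, l₃, hsplit1, hm12, hm3⟩ := List.map_eq_append_iff.mp hmap
  obtain ⟨l₁, l₂, hsplit2, hm1, hm2⟩ := List.map_eq_append_iff.mp hm12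
  refine ⟨i, l₁, l₂, l₃, ?_, ?_⟩
  · rw [hsplit1, hsplit2]
  · intro w
    constructor
    · intro hw
      have : clu w ∈ u₂ := by rw [← hm2]; exact List.mem_map.mpr ⟨w, hw, rfl⟩
      exact hall _ this
    · intro hw
      obtain ⟨j, hwj, _⟩ := huniq w
      have hkj : k ∈ (t j).toFinset := List.mem_toFinset.mpr (List.mem_map.mpr ⟨w, hwj, hw⟩)
      obtain ⟨i₀, hi₀, hu0⟩ := hexcl k
      have hji : j = i := (hu0 j hkj).trans (hu0 i hki).symm
      rw [hji, hsplit1, hsplit2] at hwj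
      rcases List.mem_append.mp hwj with h12 | h3'
      · rcases List.mem_append.mp h12 with hw1 | hw2
        · exfalso
          apply hn1
          rw [← hw, ← hm1]
          exact List.mem_map.mpr ⟨w, hw1, rfl⟩
        · exact hw2
      · exfalso
        apply hn3
        rw [← hw, ← hm3]
        exact List.mem_map.mpr ⟨w, h3', rfl⟩

end AuxMain

/-- Fix `M` larger than the sum of all edge costs.  Every `c^M`-optimal CVRP
solution minimizes the number of penalized (inter-cluster) edges; consequently,
if a cluster-contiguous solution exists, every `c^M`-optimal CVRP solution is
cluster-contiguous and is an optimal CluVRP solution. -/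
theorem bigM_reduction {C : Type*} [Fintype C] [DecidableEq C] {N m : ℕ}
    (Q : ℚ) (q : C → ℚ) (clu : C → Fin N) (hsurj : Function.Surjective clu)
    (c : Option C → Option C → ℝ) (hnn : ∀ a b, 0 ≤ c a b)
    (M : ℝ) (hM : (∑ a : Option C, ∑ b : Option C, c a b) < M)
    (s : Fin m → List C) (hs : CVRPFeasible Q q s)
    (hopt : ∀ s' : Fin m → List C, CVRPFeasible Q q s' →
      solCost (penalizedCost clu c M) s ≤ solCost (penalizedCost clu c M) s') :
    (∀ s' : Fin m → List C, CVRPFeasible Q q s' →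
      penEdgeCount clu s ≤ penEdgeCount clu s') ∧
    ((∃ s₀ : Fin m → List C, CVRPFeasible Q q s₀ ∧ ClusterContiguous clu s₀) →
      ClusterContiguous clu s ∧
      ∀ s' : Fin m → List C, CVRPFeasible Q q s' → ClusterContiguous clu s' →
        solCost c s ≤ solCost c s') := by
    classical
  obtain ⟨huniq, hnd, hne, hcap⟩ := hs
  have hM0 : 0 < M :=
    lt_of_le_of_lt (Finset.sum_nonneg fun a _ => Finset.sum_nonneg fun b _ => hnn a b) hM
  have hnonneg : ∀ s' : Fin m → List C, 0 ≤ solCost c s' := fun s' =>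
    Finset.sum_nonneg fun i _ => pathCost_nonneg c hnn _
  have hcost_lt : ∀ s' : Fin m → List C, CVRPFeasible Q q s' → solCost c s' < M := fun s' hs' =>
    lt_of_le_of_lt (solCost_le c hnn s' hs'.1 hs'.2.1 hs'.2.2.1) hM
  have hfeas : CVRPFeasible Q q s := ⟨huniq, hnd, hne, hcap⟩
  have part1 : ∀ s' : Fin m → List C, CVRPFeasible Q q s' →
      penEdgeCount clu s ≤ penEdgeCount clu s' := by
    intro s' hs'
    by_contra hlt
    push_neg at hlt
    have h1 := hopt s' hs'
    rw [solCost_pen clu c M s hne, solCost_pen clu c M s' hs'.2.2.1] at h1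
    have hcast : (penEdgeCount clu s' : ℝ) + 1 ≤ (penEdgeCount clu s : ℝ) := by
      exact_mod_cast hlt
    have hmul : M * ((penEdgeCount clu s' : ℝ) + 1) ≤ M * (penEdgeCount clu s : ℝ) :=
      mul_le_mul_of_nonneg_left hcast hM0.le
    have hexp : M * ((penEdgeCount clu s' : ℝ) + 1) = M * (penEdgeCount clu s' : ℝ) + M := by
      ring
    have hx : solCost c s' < M := hcost_lt s' hs'
    have hc0 : 0 ≤ solCost c s := hnonneg s
    linarith [h1, hmul, hexp, hx, hc0]
  refine ⟨part1, ?_⟩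
  rintro ⟨s₀, hs₀, hc₀⟩
  have hcov : ∀ k : Fin N, ∃ i, ∃ v ∈ s i, clu v = k := by
    intro k
    obtain ⟨v, hv⟩ := hsurj k
    obtain ⟨i, hi, _⟩ := huniq v
    exact ⟨i, v, hi, hv⟩
  have hub₀ : penEdgeCount clu s₀ ≤ m + N := upper_bound clu s₀ hs₀.1 hs₀.2.1 hs₀.2.2.1 hc₀
  have hle : penEdgeCount clu s ≤ m + N := (part1 s₀ hs₀).trans hub₀
  have hcs : ClusterContiguous clu s := contiguous_of_le clu hsurj s huniq hnd hne hle
  refine ⟨hcs, ?_⟩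
  intro s' hs' hc'
  have hlb : m + N ≤ penEdgeCount clu s := lower_bound clu s hne hcov
  have hcov' : ∀ k : Fin N, ∃ i, ∃ v ∈ s' i, clu v = k := by
    intro k
    obtain ⟨v, hv⟩ := hsurj k
    obtain ⟨i, hi, _⟩ := hs'.1 v
    exact ⟨i, v, hi, hv⟩
  have hlb' : m + N ≤ penEdgeCount clu s' := lower_bound clu s' hs'.2.2.1 hcov'
  have hub' : penEdgeCount clu s' ≤ m + N := upper_bound clu s' hs'.1 hs'.2.1 hs'.2.2.1 hc'
  have heq : penEdgeCount clu s = penEdgeCount clu s' := by omega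
  have h1 := hopt s' hs'
  rw [solCost_pen clu c M s hne, solCost_pen clu c M s' hs'.2.2.1, heq] at h1
  linarith [h1]
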